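/- Let N be a prime and let p, q, r > 1 be natural numbers such that each pair among {p, q, r} satisfies a divisibility condition (one divides the other). Then the number M of triples (x, y, z) ∈ (ℤ/Nℤ)³ with x^p + y^q ≡ z^r (mod N) satisfies M ≥ N² − (2N)^{3/2}·p·q·r. -/

import Mathlib

open Finset Complex

namespace Stmt10Aux

variable {N : ℕ} [NeZero N]

noncomputable def T (N : ℕ) [NeZero N] (e : ℕ) (t : ZMod N) : ℂ :=
  ∑ x : ZMod N, ZMod.stdAddChar (t * x ^ e)

lemma std_abs (u : ZMod N) : norm (ZMod.stdAddChar u) = 1 := by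
  rw [ZMod.stdAddChar_apply]; exact Circle.norm_coe _

lemma conj_std (u : ZMod N) :
    (starRingEnd ℂ) (ZMod.stdAddChar u) = ZMod.stdAddChar (-u) := by
  have h1 : ZMod.stdAddChar u * ZMod.stdAddChar (-u) = 1 := by
    rw [← AddChar.map_add_eq_mul, add_neg_cancel, AddChar.map_zero_eq_one]
  have habs : norm (ZMod.stdAddChar u) = 1 := std_abs u
  have hne : (ZMod.stdAddChar u : ℂ) ≠ 0 := by
    intro h; rw [h] at habs; simp at habs
  have h2 : ZMod.stdAddChar u * (starRingEnd ℂ) (ZMod.stdAddChar u) = 1 := by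
    rw [Complex.mul_conj, Complex.normSq_eq_norm_sq, habs]; norm_num
  exact mul_left_cancel₀ hne (h2.trans h1.symm)

lemma T_neg (e : ℕ) (t : ZMod N) : T N e (-t) = (starRingEnd ℂ) (T N e t) := by
  rw [T, T, map_sum]
  exact Finset.sum_congr rfl fun x _ => by rw [conj_std, neg_mul]

lemma T_zero (e : ℕ) : T N e 0 = (N : ℂ) := by
  simp [T, ZMod.card]

lemma prod3 {α : Type*} [Fintype α] (f g h : α → ℂ) :
    (∑ x, f x) * (∑ y, g y) * (∑ z, h z)
      = ∑ v : α × α × α, f v.1 * g v.2.1 * h v.2.2 := by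
  rw [Finset.sum_mul_sum, Finset.sum_mul, Fintype.sum_prod_type]
  refine Finset.sum_congr rfl fun x _ => ?_
  rw [Finset.sum_mul, Fintype.sum_prod_type]
  refine Finset.sum_congr rfl fun y _ => ?_
  rw [Finset.mul_sum]

lemma prod2 {α : Type*} [Fintype α] (f g : α → ℂ) :
    (∑ x, f x) * (∑ y, g y) = ∑ v : α × α, f v.1 * g v.2 := by
  rw [Finset.sum_mul_sum, Fintype.sum_prod_type]

lemma key3 (p q r : ℕ) :
    ∑ t : ZMod N, T N p t * T N q t * (starRingEnd ℂ) (T N r t) =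
      (N : ℂ) * ((Finset.univ.filter
        (fun v : ZMod N × ZMod N × ZMod N => v.1 ^ p + v.2.1 ^ q = v.2.2 ^ r)).card) := by
  classical
  have expand : ∀ t : ZMod N, T N p t * T N q t * (starRingEnd ℂ) (T N r t)
      = ∑ v : ZMod N × ZMod N × ZMod N,
          ZMod.stdAddChar (t * (v.1 ^ p + v.2.1 ^ q - v.2.2 ^ r)) := by
    intro t
    rw [← T_neg, T, T, T, prod3]
    refine Finset.sum_congr rfl fun v _ => ?_
    rw [← AddChar.map_add_eq_mul, ← AddChar.map_add_eq_mul]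
    congr 1
    ring
  calc ∑ t : ZMod N, T N p t * T N q t * (starRingEnd ℂ) (T N r t)
      = ∑ v : ZMod N × ZMod N × ZMod N, ∑ t : ZMod N,
          ZMod.stdAddChar (t * (v.1 ^ p + v.2.1 ^ q - v.2.2 ^ r)) := by
        rw [← Finset.sum_comm]
        exact Finset.sum_congr rfl fun t _ => expand t
    _ = ∑ v : ZMod N × ZMod N × ZMod N,
          (N : ℂ) * (if v.1 ^ p + v.2.1 ^ q = v.2.2 ^ r then 1 else 0) := by
        refine Finset.sum_congr rfl fun v _ => ?_
        rw [AddChar.sum_mulShift _ (ZMod.isPrimitive_stdAddChar N)]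
        by_cases h : v.1 ^ p + v.2.1 ^ q = v.2.2 ^ r
        · simp [sub_eq_zero.mpr h, h, ZMod.card]
        · have h' : v.1 ^ p + v.2.1 ^ q - v.2.2 ^ r ≠ 0 := fun hc => h (sub_eq_zero.mp hc)
          simp [h, h']
    _ = (N : ℂ) * ((Finset.univ.filter
        (fun v : ZMod N × ZMod N × ZMod N => v.1 ^ p + v.2.1 ^ q = v.2.2 ^ r)).card) := by
        rw [← Finset.mul_sum, Finset.sum_boole]

lemma key2 (e : ℕ) :
    ∑ t : ZMod N, T N e t * (starRingEnd ℂ) (T N e t) =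
      (N : ℂ) * ((Finset.univ.filter
        (fun v : ZMod N × ZMod N => v.1 ^ e = v.2 ^ e)).card) := by
  classical
  have expand : ∀ t : ZMod N, T N e t * (starRingEnd ℂ) (T N e t)
      = ∑ v : ZMod N × ZMod N, ZMod.stdAddChar (t * (v.1 ^ e - v.2 ^ e)) := by
    intro t
    rw [← T_neg, T, T, prod2]
    refine Finset.sum_congr rfl fun v _ => ?_
    rw [← AddChar.map_add_eq_mul]
    congr 1
    ring
  calc ∑ t : ZMod N, T N e t * (starRingEnd ℂ) (T N e t)
      = ∑ v : ZMod N × ZMod N, ∑ t : ZMod N,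
          ZMod.stdAddChar (t * (v.1 ^ e - v.2 ^ e)) := by
        rw [← Finset.sum_comm]
        exact Finset.sum_congr rfl fun t _ => expand t
    _ = ∑ v : ZMod N × ZMod N, (N : ℂ) * (if v.1 ^ e = v.2 ^ e then 1 else 0) := by
        refine Finset.sum_congr rfl fun v _ => ?_
        rw [AddChar.sum_mulShift _ (ZMod.isPrimitive_stdAddChar N)]
        by_cases h : v.1 ^ e = v.2 ^ e
        · simp [sub_eq_zero.mpr h, h, ZMod.card]
        · have h' : v.1 ^ e - v.2 ^ e ≠ 0 := fun hc => h (sub_eq_zero.mp hc)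
          simp [h, h']
    _ = _ := by rw [← Finset.mul_sum, Finset.sum_boole]

lemma root_count [Fact N.Prime] {e : ℕ} (he : 0 < e) (w : ZMod N) :
    (Finset.univ.filter (fun x : ZMod N => x ^ e = w)).card ≤ e := by
  classical
  have h : Finset.univ.filter (fun x : ZMod N => x ^ e = w)
      ⊆ (Polynomial.nthRoots e w).toFinset := by
    intro x hx
    rw [Finset.mem_filter] at hx
    rw [Multiset.mem_toFinset, Polynomial.mem_nthRoots he]
    exact hx.2
  calc (Finset.univ.filter (fun x : ZMod N => x ^ e = w)).card
      ≤ (Polynomial.nthRoots e w).toFinset.card := Finset.card_le_card h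
    _ ≤ Multiset.card (Polynomial.nthRoots e w) := Multiset.toFinset_card_le _
    _ ≤ e := Polynomial.card_nthRoots e w

/-- The second moment of the exponential sums, bounded. -/
lemma L2r [Fact N.Prime] {e : ℕ} (he : 0 < e) :
    ∑ t : ZMod N, norm (T N e t) ^ 2 ≤ (e : ℝ) * (N : ℝ) ^ 2 := by
  classical
  -- the exact identity
  have hK : ((Finset.univ.filter (fun v : ZMod N × ZMod N => v.1 ^ e = v.2 ^ e)).card : ℝ)
      ≤ (e : ℝ) * N := by
    have h : (Finset.univ.filter (fun v : ZMod N × ZMod N => v.1 ^ e = v.2 ^ e)).card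
        = ∑ y : ZMod N, (Finset.univ.filter (fun x : ZMod N => x ^ e = y ^ e)).card := by
      rw [Finset.card_filter, Fintype.sum_prod_type_right]
      refine Finset.sum_congr rfl fun y _ => ?_
      rw [Finset.card_filter]
    have h2 : (Finset.univ.filter
        (fun v : ZMod N × ZMod N => v.1 ^ e = v.2 ^ e)).card ≤ e * N := by
      rw [h]
      calc ∑ y : ZMod N, (Finset.univ.filter (fun x : ZMod N => x ^ e = y ^ e)).card
          ≤ ∑ _y : ZMod N, e := Finset.sum_le_sum fun y _ => root_count he _
        _ = e * N := by simp [ZMod.card, mul_comm]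
    exact_mod_cast h2
  have hident : ∑ t : ZMod N, norm (T N e t) ^ 2
      = (N : ℝ) * ((Finset.univ.filter
          (fun v : ZMod N × ZMod N => v.1 ^ e = v.2 ^ e)).card : ℝ) := by
    have h := key2 (N := N) e
    have h2 : ∀ t : ZMod N, T N e t * (starRingEnd ℂ) (T N e t)
        = ((norm (T N e t) ^ 2 : ℝ) : ℂ) := fun t => by
      rw [Complex.mul_conj, Complex.normSq_eq_norm_sq]
    rw [Finset.sum_congr rfl (fun t _ => h2 t)] at h
    have h3 : ((∑ t : ZMod N, norm (T N e t) ^ 2 : ℝ) : ℂ)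
        = (((N : ℝ) * ((Finset.univ.filter
            (fun v : ZMod N × ZMod N => v.1 ^ e = v.2 ^ e)).card : ℝ) : ℝ) : ℂ) := by
      push_cast
      push_cast at h
      exact h
    exact_mod_cast h3
  rw [hident]
  calc (N : ℝ) * ((Finset.univ.filter
        (fun v : ZMod N × ZMod N => v.1 ^ e = v.2 ^ e)).card : ℝ)
      ≤ (N : ℝ) * ((e : ℝ) * N) := by
        apply mul_le_mul_of_nonneg_left hK (by positivity)
    _ = (e : ℝ) * (N : ℝ) ^ 2 := by ring

lemma T_mul_unit [Fact N.Prime] (e : ℕ) (t : ZMod N) (s : (ZMod N)ˣ) :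
    T N e (t * (s : ZMod N) ^ e) = T N e t := by
  rw [T, T]
  refine Fintype.sum_equiv (Equiv.mulLeft₀ (s : ZMod N) s.ne_zero) _ _ fun x => ?_
  simp only [Equiv.mulLeft₀_apply]
  congr 1
  rw [mul_pow]
  ring

lemma orbit_bound [Fact N.Prime] {r : ℕ} (hr : 0 < r) {t : ZMod N} (ht : t ≠ 0) :
    ((N : ℝ) - 1) * norm (T N r t) ^ 2
      ≤ (r : ℝ) * ∑ u : ZMod N, norm (T N r u) ^ 2 := by
  classical
  set O : Finset (ZMod N) := Finset.univ.image (fun s : (ZMod N)ˣ => t * (s : ZMod N) ^ r) with hO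
  have hcardO : (Fintype.card (ZMod N)ˣ : ℝ) ≤ (r : ℝ) * O.card := by
    have h0 : (Finset.univ : Finset ((ZMod N)ˣ)).card ≤ r * O.card := by
      refine Finset.card_le_mul_card_image _ r fun u hu => ?_
      have hinj : ∀ a ∈ (Finset.univ.filter
          (fun s : (ZMod N)ˣ => t * (s : ZMod N) ^ r = u)), ((a : ZMod N)) ∈
          (Finset.univ.filter (fun x : ZMod N => x ^ r = t⁻¹ * u)) := by
        intro a ha
        rw [Finset.mem_filter] at ha ⊢
        refine ⟨Finset.mem_univ _, ?_⟩
        rw [← ha.2]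
        field_simp
      calc (Finset.univ.filter (fun s : (ZMod N)ˣ => t * (s : ZMod N) ^ r = u)).card
          ≤ (Finset.univ.filter (fun x : ZMod N => x ^ r = t⁻¹ * u)).card := by
            refine Finset.card_le_card_of_injOn (fun s => (s : ZMod N)) hinj ?_
            intro a _ b _ hab
            exact Units.ext hab
        _ ≤ r := root_count hr _
    calc (Fintype.card (ZMod N)ˣ : ℝ) = ((Finset.univ : Finset ((ZMod N)ˣ)).card : ℝ) := by
          rw [Finset.card_univ]
      _ ≤ (r : ℝ) * O.card := by exact_mod_cast h0
  have hval : ∀ u ∈ O, norm (T N r u) ^ 2 = norm (T N r t) ^ 2 := by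
    intro u hu
    rw [hO, Finset.mem_image] at hu
    obtain ⟨s, _, rfl⟩ := hu
    rw [T_mul_unit]
  have hsub : ∑ u ∈ O, norm (T N r u) ^ 2 ≤ ∑ u : ZMod N, norm (T N r u) ^ 2 :=
    Finset.sum_le_sum_of_subset_of_nonneg (Finset.subset_univ _)
      (fun _ _ _ => by positivity)
  have hOsum : ∑ u ∈ O, norm (T N r u) ^ 2 = O.card * norm (T N r t) ^ 2 := by
    rw [Finset.sum_congr rfl hval, Finset.sum_const, nsmul_eq_mul]
  have hunits : (Fintype.card (ZMod N)ˣ : ℝ) = (N : ℝ) - 1 := by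
    rw [ZMod.card_units_eq_totient]
    rw [Nat.totient_prime (Fact.out : N.Prime)]
    have h2 : 1 ≤ N := (Fact.out : N.Prime).one_lt.le
    push_cast [Nat.cast_sub h2]
    ring
  calc ((N : ℝ) - 1) * norm (T N r t) ^ 2
      = (Fintype.card (ZMod N)ˣ : ℝ) * norm (T N r t) ^ 2 := by rw [hunits]
    _ ≤ (r : ℝ) * O.card * norm (T N r t) ^ 2 := by
        apply mul_le_mul_of_nonneg_right hcardO (by positivity)
    _ = (r : ℝ) * (O.card * norm (T N r t) ^ 2) := by ring
    _ = (r : ℝ) * ∑ u ∈ O, norm (T N r u) ^ 2 := by rw [hOsum]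
    _ ≤ (r : ℝ) * ∑ u : ZMod N, norm (T N r u) ^ 2 := by
        apply mul_le_mul_of_nonneg_left hsub (by positivity)

/-- Pointwise bound for the exponential sum at nonzero frequencies. -/
lemma pointwise_bound [Fact N.Prime] {r : ℕ} (hr : 0 < r) {t : ZMod N} (ht : t ≠ 0) :
    norm (T N r t) ≤ (r : ℝ) * Real.sqrt (2 * N) := by
  have hN2 : (2 : ℝ) ≤ (N : ℝ) := by exact_mod_cast (Fact.out : N.Prime).two_le
  have h1 : ((N : ℝ) - 1) * norm (T N r t) ^ 2
      ≤ (r : ℝ) * ((r : ℝ) * (N : ℝ) ^ 2) :=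
    le_trans (orbit_bound hr ht)
      (mul_le_mul_of_nonneg_left (L2r hr) (by positivity))
  have hNpos : (0 : ℝ) < (N : ℝ) - 1 := by linarith
  have hsq : norm (T N r t) ^ 2 ≤ (r : ℝ) ^ 2 * (2 * N) := by
    have hkey : (0 : ℝ) ≤ (r : ℝ) ^ 2 * ((N : ℝ) ^ 2 - 2 * N) :=
      mul_nonneg (by positivity) (by nlinarith)
    have h3 : ((N : ℝ) - 1) * norm (T N r t) ^ 2
        ≤ ((N : ℝ) - 1) * ((r : ℝ) ^ 2 * (2 * N)) := by nlinarith
    exact le_of_mul_le_mul_left h3 hNpos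
  calc norm (T N r t) = Real.sqrt (norm (T N r t) ^ 2) := by
        rw [Real.sqrt_sq (norm_nonneg _)]
    _ ≤ Real.sqrt ((r : ℝ) ^ 2 * (2 * N)) := Real.sqrt_le_sqrt hsq
    _ = (r : ℝ) * Real.sqrt (2 * N) := by
        rw [Real.sqrt_mul (by positivity), Real.sqrt_sq (by positivity)]

end Stmt10Aux

theorem stmt_10 (N : ℕ) (hN : N.Prime) (p q r : ℕ) (hp : 1 < p) (hq : 1 < q) (hr : 1 < r)
    (h1 : q ∣ r ∨ r ∣ q) (h2 : p ∣ r ∨ r ∣ p) (h3 : q ∣ p ∨ p ∣ q) :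
    (Nat.card {xyz : ZMod N × ZMod N × ZMod N //
        xyz.1 ^ p + xyz.2.1 ^ q = xyz.2.2 ^ r} : ℝ) ≥
      (N : ℝ) ^ 2 - (2 * N : ℝ) ^ ((3 : ℝ) / 2) * p * q * r := by
  classical
  haveI hNF : Fact N.Prime := ⟨hN⟩
  haveI : NeZero N := ⟨hN.pos.ne'⟩
  set S : Finset (ZMod N × ZMod N × ZMod N) :=
    Finset.univ.filter (fun v => v.1 ^ p + v.2.1 ^ q = v.2.2 ^ r) with hS
  have hM : Nat.card {xyz : ZMod N × ZMod N × ZMod N //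
      xyz.1 ^ p + xyz.2.1 ^ q = xyz.2.2 ^ r} = S.card := by
    rw [Nat.card_eq_fintype_card, Fintype.card_subtype]
  rw [hM]
  have hNpos : (0 : ℝ) < (N : ℝ) := by exact_mod_cast hN.pos
  have hN2 : (2 : ℝ) ≤ (N : ℝ) := by exact_mod_cast hN.two_le
  set F : ZMod N → ℂ :=
    fun t => Stmt10Aux.T N p t * Stmt10Aux.T N q t * (starRingEnd ℂ) (Stmt10Aux.T N r t) with hF
  have hkey : ∑ t : ZMod N, F t = (N : ℂ) * (S.card : ℂ) := Stmt10Aux.key3 p q r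
  have hF0 : F 0 = (N : ℂ) ^ 3 := by
    rw [hF]
    simp only [Stmt10Aux.T_zero, map_natCast]
    ring
  have hsplit : (N : ℂ) * (S.card : ℂ) - (N : ℂ) ^ 3
      = ∑ t ∈ Finset.univ.erase (0 : ZMod N), F t := by
    rw [← hkey, ← Finset.add_sum_erase Finset.univ F (Finset.mem_univ 0), hF0]
    ring
  set a : ℕ → ZMod N → ℝ := fun e t => norm (Stmt10Aux.T N e t) with ha
  have habs : |(N : ℝ) * (S.card : ℝ) - (N : ℝ) ^ 3|
      ≤ ∑ t ∈ Finset.univ.erase (0 : ZMod N), a p t * a q t * a r t := by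
    calc |(N : ℝ) * (S.card : ℝ) - (N : ℝ) ^ 3|
        = norm ((N : ℂ) * (S.card : ℂ) - (N : ℂ) ^ 3) := by
          rw [show ((N : ℂ) * (S.card : ℂ) - (N : ℂ) ^ 3)
            = (((N : ℝ) * (S.card : ℝ) - (N : ℝ) ^ 3 : ℝ) : ℂ) by push_cast; ring]
          rw [Complex.norm_real, Real.norm_eq_abs]
      _ = norm (∑ t ∈ Finset.univ.erase (0 : ZMod N), F t) := by rw [hsplit]
      _ ≤ ∑ t ∈ Finset.univ.erase (0 : ZMod N), norm (F t) :=
          norm_sum_le _ _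
      _ = ∑ t ∈ Finset.univ.erase (0 : ZMod N), a p t * a q t * a r t := by
          refine Finset.sum_congr rfl fun t _ => ?_
          rw [hF, norm_mul, norm_mul, Complex.norm_conj]
  -- bound the error sum
  set β : ℝ := (r : ℝ) * Real.sqrt (2 * N) with hβ
  have hβ0 : 0 ≤ β := by positivity
  have hstep1 : ∑ t ∈ Finset.univ.erase (0 : ZMod N), a p t * a q t * a r t
      ≤ (∑ t ∈ Finset.univ.erase (0 : ZMod N), a p t * a q t) * β := by
    rw [Finset.sum_mul]
    refine Finset.sum_le_sum fun t ht => ?_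
    have ht0 : t ≠ 0 := Finset.ne_of_mem_erase ht
    rw [mul_assoc, mul_assoc]
    refine mul_le_mul_of_nonneg_left ?_ (by positivity)
    refine mul_le_mul_of_nonneg_left ?_ (by positivity)
    exact Stmt10Aux.pointwise_bound (by omega) ht0
  have hsum_sq : ∀ e : ℕ, 0 < e →
      ∑ t ∈ Finset.univ.erase (0 : ZMod N), a e t ^ 2 ≤ (e : ℝ) * (N : ℝ) ^ 2 := by
    intro e he
    refine le_trans ?_ (Stmt10Aux.L2r (N := N) he)
    exact Finset.sum_le_sum_of_subset_of_nonneg (Finset.subset_univ _)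
      (fun _ _ _ => by positivity)
  have hCS : (∑ t ∈ Finset.univ.erase (0 : ZMod N), a p t * a q t) ^ 2
      ≤ ((p : ℝ) * (N : ℝ) ^ 2) * ((q : ℝ) * (N : ℝ) ^ 2) := by
    refine le_trans (Finset.sum_mul_sq_le_sq_mul_sq _ _ _) ?_
    exact mul_le_mul (hsum_sq p (by omega)) (hsum_sq q (by omega))
      (Finset.sum_nonneg fun _ _ => by positivity) (by positivity)
  have hCS' : ∑ t ∈ Finset.univ.erase (0 : ZMod N), a p t * a q t
      ≤ (p : ℝ) * (q : ℝ) * (N : ℝ) ^ 2 := by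
    have hX0 : 0 ≤ ∑ t ∈ Finset.univ.erase (0 : ZMod N), a p t * a q t :=
      Finset.sum_nonneg fun _ _ => by positivity
    have h2 : ((p : ℝ) * (N : ℝ) ^ 2) * ((q : ℝ) * (N : ℝ) ^ 2)
        ≤ ((p : ℝ) * (q : ℝ) * (N : ℝ) ^ 2) ^ 2 := by
      have hp1 : (1 : ℝ) ≤ (p : ℝ) := by exact_mod_cast hp.le
      have hq1 : (1 : ℝ) ≤ (q : ℝ) := by exact_mod_cast hq.le
      have e1 : ((p : ℝ) * q * (N : ℝ) ^ 2) ^ 2 - ((p : ℝ) * (N : ℝ) ^ 2) * ((q : ℝ) * (N : ℝ) ^ 2)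
          = ((p : ℝ) * q) * ((p : ℝ) * q - 1) * ((N : ℝ) ^ 2) ^ 2 := by ring
      have e2 : (0 : ℝ) ≤ ((p : ℝ) * q) * ((p : ℝ) * q - 1) * ((N : ℝ) ^ 2) ^ 2 := by
        have h02 : (0 : ℝ) ≤ (p : ℝ) * q - 1 := by nlinarith
        exact mul_nonneg (mul_nonneg (by positivity) h02) (by positivity)
      linarith
    calc ∑ t ∈ Finset.univ.erase (0 : ZMod N), a p t * a q t
        = Real.sqrt ((∑ t ∈ Finset.univ.erase (0 : ZMod N), a p t * a q t) ^ 2) :=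
          (Real.sqrt_sq hX0).symm
      _ ≤ Real.sqrt (((p : ℝ) * (q : ℝ) * (N : ℝ) ^ 2) ^ 2) :=
          Real.sqrt_le_sqrt (le_trans hCS h2)
      _ = (p : ℝ) * (q : ℝ) * (N : ℝ) ^ 2 := Real.sqrt_sq (by positivity)
  have hrpow : ((2 : ℝ) * N) ^ ((3 : ℝ) / 2) = (2 * (N : ℝ)) * Real.sqrt (2 * N) := by
    rw [show ((3 : ℝ) / 2) = 1 + 1 / 2 by norm_num,
      Real.rpow_add (by positivity), Real.rpow_one, ← Real.sqrt_eq_rpow]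
  have hfinal : ∑ t ∈ Finset.univ.erase (0 : ZMod N), a p t * a q t * a r t
      ≤ ((2 : ℝ) * N) ^ ((3 : ℝ) / 2) * p * q * r * N := by
    have hs0 : 0 ≤ Real.sqrt (2 * (N : ℝ)) := Real.sqrt_nonneg _
    calc ∑ t ∈ Finset.univ.erase (0 : ZMod N), a p t * a q t * a r t
        ≤ (∑ t ∈ Finset.univ.erase (0 : ZMod N), a p t * a q t) * β := hstep1
      _ ≤ ((p : ℝ) * (q : ℝ) * (N : ℝ) ^ 2) * β := mul_le_mul_of_nonneg_right hCS' hβ0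
      _ ≤ ((2 : ℝ) * N) ^ ((3 : ℝ) / 2) * p * q * r * N := by
          rw [hrpow, hβ]
          have hp0 : (0 : ℝ) < p := by exact_mod_cast (by omega : 0 < p)
          have hq0 : (0 : ℝ) < q := by exact_mod_cast (by omega : 0 < q)
          have hr0 : (0 : ℝ) < r := by exact_mod_cast (by omega : 0 < r)
          nlinarith [mul_nonneg (mul_nonneg hp0.le hq0.le) hr0.le, hs0,
            mul_pos hNpos hNpos,
            mul_nonneg (mul_nonneg (mul_nonneg hp0.le hq0.le) hr0.le)
              (mul_nonneg hs0 (mul_nonneg hNpos.le hNpos.le))]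
  -- conclude
  have hlow : -((2 * (N : ℝ)) ^ ((3 : ℝ) / 2) * p * q * r * N)
      ≤ (N : ℝ) * (S.card : ℝ) - (N : ℝ) ^ 3 := by
    have := (abs_le.mp (le_trans habs hfinal)).1
    linarith [this]
  have : (N : ℝ) * ((N : ℝ) ^ 2 - (2 * (N : ℝ)) ^ ((3 : ℝ) / 2) * p * q * r)
      ≤ (N : ℝ) * (S.card : ℝ) := by nlinarith [hlow]
  have hfin := le_of_mul_le_mul_left this hNpos
  exact hfin
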